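/- Let M be a Garside monoid with Garside element Δ, let N be a parabolic submonoid of M, and let Δ_N be the Garside element of N with Div(Δ_N) = Div(Δ) ∩ N. Let a, b ∈ M. Then: (1) the ⪯_L-increasing sequence (b ∧_L Δ_N^n)_{n≥0} stabilizes for n ≥ |b|; (2) the ⪯_R-increasing sequence (a ∧_R (Δ_N^n b))_{n≥0} stabilizes for n ≥ |a|. -/

import Mathlib

namespace PG

variable {M : Type*} [Monoid M]

/-- `LDvd a b` : `a` left-divides `b`. -/
def LDvd (a b : M) : Prop := ∃ c, b = a * c

/-- `RDvd a b` : `a` right-divides `b`. -/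
def RDvd (a b : M) : Prop := ∃ c, b = c * a

/-- A monoid is cancellative if `c * a * d = c * b * d` implies `a = b`. -/
def IsCancellative (M : Type*) [Monoid M] : Prop :=
  ∀ a b c d : M, c * a * d = c * b * d → a = b

/-- A monoid is atomic if it admits a norm `ν : M → ℕ` with `ν a > 0` for `a ≠ 1`
and `ν (a * b) ≥ ν a + ν b`. -/
def IsAtomicMon (M : Type*) [Monoid M] : Prop :=
  ∃ ν : M → ℕ, (∀ a : M, a ≠ 1 → 0 < ν a) ∧ ∀ a b : M, ν a + ν b ≤ ν (a * b)

/-- `m` is the least common multiple of `a` and `b` for left-divisibility. -/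
def IsLcmL (a b m : M) : Prop :=
  LDvd a m ∧ LDvd b m ∧ ∀ c : M, LDvd a c → LDvd b c → LDvd m c

/-- `m` is the least common multiple of `a` and `b` for right-divisibility. -/
def IsLcmR (a b m : M) : Prop :=
  RDvd a m ∧ RDvd b m ∧ ∀ c : M, RDvd a c → RDvd b c → RDvd m c

/-- `d` is the greatest common left-divisor of `a` and `b`. -/
def IsGcdL (a b d : M) : Prop :=
  LDvd d a ∧ LDvd d b ∧ ∀ c : M, LDvd c a → LDvd c b → LDvd c d

/-- `d` is the greatest common right-divisor of `a` and `b`. -/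
def IsGcdR (a b d : M) : Prop :=
  RDvd d a ∧ RDvd d b ∧ ∀ c : M, RDvd c a → RDvd c b → RDvd c d

/-- A preGarside monoid: cancellative, atomic, and any two elements admitting a
common multiple (on the appropriate side) admit a least one. -/
def IsPreGarside (M : Type*) [Monoid M] : Prop :=
  IsCancellative M ∧ IsAtomicMon M ∧
    (∀ a b : M, (∃ c, LDvd a c ∧ LDvd b c) → ∃ m, IsLcmL a b m) ∧
    (∀ a b : M, (∃ c, RDvd a c ∧ RDvd b c) → ∃ m, IsLcmR a b m)

/-- A submonoid is special if it is closed under factors. -/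
def IsSpecial (N : Submonoid M) : Prop := ∀ a b : M, a * b ∈ N → a ∈ N ∧ b ∈ N

/-- A (standard) parabolic submonoid: special and closed under all existing lcms. -/
def IsParabolic (N : Submonoid M) : Prop :=
  IsSpecial N ∧ (∀ a b m : M, a ∈ N → b ∈ N → IsLcmL a b m → m ∈ N) ∧
    ∀ a b m : M, a ∈ N → b ∈ N → IsLcmR a b m → m ∈ N

/-- `b` is a factor of `a`. -/
def Factor (b a : M) : Prop := ∃ c d : M, a = c * b * d

/-- The set of factors of `a`. -/
def Factors (a : M) : Set M := {b | Factor b a}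

/-- An element is balanced when its left-divisors and right-divisors coincide. -/
def IsBalanced (a : M) : Prop := {b : M | LDvd b a} = {b : M | RDvd b a}

/-- A Garside element: balanced, and its factors generate the monoid. -/
def IsGarsideElt (Δ : M) : Prop := IsBalanced Δ ∧ Submonoid.closure (Factors Δ) = ⊤

/-- A Garside monoid: a preGarside monoid possessing a Garside element. -/
def IsGarside (M : Type*) [Monoid M] : Prop := IsPreGarside M ∧ ∃ Δ : M, IsGarsideElt Δ

/-- The factors of `a` computed inside the submonoid `N`. -/
def FactorsIn (N : Submonoid M) (a : M) : Set M :=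
  {b | b ∈ N ∧ ∃ c ∈ N, ∃ d ∈ N, a = c * b * d}

/-- `Δ` is a Garside element of the submonoid `N`: it is balanced in `N` and its
factors in `N` generate `N`. -/
def IsGarsideEltIn (N : Submonoid M) (Δ : M) : Prop :=
  Δ ∈ N ∧ ({b : M | b ∈ N ∧ ∃ c ∈ N, Δ = b * c} = {b : M | b ∈ N ∧ ∃ c ∈ N, Δ = c * b}) ∧
    Submonoid.closure (FactorsIn N Δ) = N

/-- The right coset `g * N` (an `R_N`-class). -/
def RCoset (N : Submonoid M) (g : M) : Set M := {x | ∃ h ∈ N, x = g * h}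

/-- The left coset `N * g` (an `L_N`-class). -/
def LCoset (N : Submonoid M) (g : M) : Set M := {x | ∃ h ∈ N, x = h * g}

/-- `RReduces N B A` : the `R_N`-class `B` reduces in one step to the `R_N`-class `A`,
i.e. `A = g₁ N`, `B = g₂ N` with `g₂ ∈ g₁ N` and `g₁ ∉ g₂ N`. -/
def RReduces (N : Submonoid M) (B A : Set M) : Prop :=
  ∃ g₁ g₂ : M, A = RCoset N g₁ ∧ B = RCoset N g₂ ∧ g₂ ∈ RCoset N g₁ ∧ g₁ ∉ RCoset N g₂

/-- `LReduces N B A` : the `L_N`-class `B` reduces in one step to the `L_N`-class `A`. -/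
def LReduces (N : Submonoid M) (B A : Set M) : Prop :=
  ∃ g₁ g₂ : M, A = LCoset N g₁ ∧ B = LCoset N g₂ ∧ g₂ ∈ LCoset N g₁ ∧ g₁ ∉ LCoset N g₂

/-- `N` has the `R` confluence property: the reduction rule on `R_N`-classes is
Noetherian and locally confluent. -/
def RConfluence (N : Submonoid M) : Prop :=
  (¬ ∃ f : ℕ → Set M, ∀ n : ℕ, RReduces N (f n) (f (n + 1))) ∧
    ∀ C A B : Set M, RReduces N C A → RReduces N C B →
      ∃ D : Set M, Relation.ReflTransGen (RReduces N) A D ∧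
        Relation.ReflTransGen (RReduces N) B D

/-- `N` has the `L` confluence property. -/
def LConfluence (N : Submonoid M) : Prop :=
  (¬ ∃ f : ℕ → Set M, ∀ n : ℕ, LReduces N (f n) (f (n + 1))) ∧
    ∀ C A B : Set M, LReduces N C A → LReduces N C B →
      ∃ D : Set M, Relation.ReflTransGen (LReduces N) A D ∧
        Relation.ReflTransGen (LReduces N) B D

/-- `N` has the confluence property. -/
def Confluence (N : Submonoid M) : Prop := RConfluence N ∧ LConfluence N

/-- The `R_N`-class `C` is minimal: whenever `g` represents `C` and `g = g' * h` with
`h ∈ N`, one has `g' N = C`. -/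
def IsMinimalRCoset (N : Submonoid M) (C : Set M) : Prop :=
  (∃ g : M, C = RCoset N g) ∧
    ∀ g g' h : M, h ∈ N → C = RCoset N g → g = g' * h → RCoset N g' = C

/-- The `L_N`-class `C` is minimal. -/
def IsMinimalLCoset (N : Submonoid M) (C : Set M) : Prop :=
  (∃ g : M, C = LCoset N g) ∧
    ∀ g g' h : M, h ∈ N → C = LCoset N g → g = h * g' → LCoset N g' = C

/-- The set of atoms of `M`. -/
def AtomSet (M : Type*) [Monoid M] : Set M :=
  {a | a ≠ 1 ∧ ∀ b c : M, a = b * c → b = 1 ∨ c = 1}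

/-- `|x|` : the least number of factors of `Δ` needed to write `x` as a product. -/
noncomputable def lenFactors (Δ x : M) : ℕ :=
  sInf {k | ∃ l : List M, l.length = k ∧ (∀ y ∈ l, y ∈ Factors Δ) ∧ l.prod = x}

section Amalgam

variable {M₁ M₂ N : Type*} [Monoid M₁] [Monoid M₂] [Monoid N]

/-- The congruence on the free product `M₁ ∗ M₂` identifying `ι₁ h` with `ι₂ h`
for every `h ∈ N`. -/
def amalgamCon (ι₁ : N →* M₁) (ι₂ : N →* M₂) : Con (Monoid.Coprod M₁ M₂) :=
  conGen fun a b => ∃ h : N, a = Monoid.Coprod.inl (ι₁ h) ∧ b = Monoid.Coprod.inr (ι₂ h)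

/-- The amalgamated product `M₁ *_N M₂` : the pushout of `ι₁ : N →* M₁` and
`ι₂ : N →* M₂` in the category of monoids. -/
def Amalgam (ι₁ : N →* M₁) (ι₂ : N →* M₂) : Type _ := (amalgamCon ι₁ ι₂).Quotient

instance (ι₁ : N →* M₁) (ι₂ : N →* M₂) : Monoid (Amalgam ι₁ ι₂) :=
  inferInstanceAs (Monoid (amalgamCon ι₁ ι₂).Quotient)

/-- The canonical morphism `M₁ →* M₁ *_N M₂`. -/
def amalgamInl (ι₁ : N →* M₁) (ι₂ : N →* M₂) : M₁ →* Amalgam ι₁ ι₂ :=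
  (amalgamCon ι₁ ι₂).mk'.comp Monoid.Coprod.inl

/-- The canonical morphism `M₂ →* M₁ *_N M₂`. -/
def amalgamInr (ι₁ : N →* M₁) (ι₂ : N →* M₂) : M₂ →* Amalgam ι₁ ι₂ :=
  (amalgamCon ι₁ ι₂).mk'.comp Monoid.Coprod.inr

end Amalgam

section Core

variable {A : Type*} [Monoid A] {Δ : A} {ν : A → ℕ}

theorem LDvd.refl (a : A) : LDvd a a := ⟨1, (mul_one a).symm⟩

theorem LDvd.trans {a b c : A} (h1 : LDvd a b) (h2 : LDvd b c) : LDvd a c := by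
  obtain ⟨u, rfl⟩ := h1; obtain ⟨v, rfl⟩ := h2; exact ⟨u * v, mul_assoc _ _ _⟩

theorem one_ldvd (a : A) : LDvd 1 a := ⟨a, (one_mul a).symm⟩

theorem nu_one (hνm : ∀ a b : A, ν a + ν b ≤ ν (a * b)) : ν (1 : A) = 0 := by
  have := hνm 1 1; rw [mul_one] at this; omega

theorem eq_one_of_mul_eq_one (hν0 : ∀ a : A, a ≠ 1 → 0 < ν a)
    (hνm : ∀ a b : A, ν a + ν b ≤ ν (a * b)) {x y : A} (h : x * y = 1) :
    x = 1 ∧ y = 1 := by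
  have h1 := nu_one hνm
  constructor <;> by_contra hc
  · have := hν0 x hc; have := hνm x y; rw [h, h1] at this; omega
  · have := hν0 y hc; have := hνm x y; rw [h, h1] at this; omega

theorem ldvd_one_eq (hν0 : ∀ a : A, a ≠ 1 → 0 < ν a)
    (hνm : ∀ a b : A, ν a + ν b ≤ ν (a * b)) {x : A} (h : LDvd x (1 : A)) : x = 1 := by
  obtain ⟨c, hc⟩ := h; exact (eq_one_of_mul_eq_one hν0 hνm hc.symm).1

theorem mem_factors_of_ldvd {x : A} (h : LDvd x Δ) : x ∈ Factors Δ := by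
  obtain ⟨c, hc⟩ := h; exact ⟨1, c, by rw [one_mul, hc]⟩

theorem mem_factors_of_rdvd {x : A} (h : RDvd x Δ) : x ∈ Factors Δ := by
  obtain ⟨c, hc⟩ := h; exact ⟨c, 1, by rw [mul_one, hc]⟩

theorem rdvd_of_mem_factors (hbal : IsBalanced Δ) {x : A} (h : x ∈ Factors Δ) :
    RDvd x Δ := by
  obtain ⟨c, d, hcd⟩ := h
  have h1 : LDvd (c * x) Δ := ⟨d, hcd⟩
  have h2 : RDvd (c * x) Δ := by
    have := Set.ext_iff.1 hbal (c * x); exact this.1 h1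
  obtain ⟨e, he⟩ := h2
  exact ⟨e * c, by rw [he, mul_assoc]⟩

theorem ldvd_of_mem_factors (hbal : IsBalanced Δ) {x : A} (h : x ∈ Factors Δ) :
    LDvd x Δ := by
  have h2 := rdvd_of_mem_factors hbal h
  have := Set.ext_iff.1 hbal x; exact this.2 h2

theorem one_mem_factors : (1 : A) ∈ Factors Δ := ⟨1, Δ, by rw [mul_one, one_mul]⟩

/-- Every nontrivial element has a nontrivial simple left-divisor (head). -/
theorem simple_head (hgen : ∀ x : A, ∃ l : List A, (∀ y ∈ l, y ∈ Factors Δ) ∧ l.prod = x)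
    {x : A} (hx : x ≠ 1) : ∃ s y : A, s ∈ Factors Δ ∧ s ≠ 1 ∧ x = s * y := by
  obtain ⟨l, hl, hp⟩ := hgen x
  subst hp
  induction l with
  | nil => simp at hx
  | cons s rest ih =>
    by_cases hs : s = 1
    · subst hs; rw [List.prod_cons, one_mul] at hx ⊢
      exact ih (fun y hy => hl y (List.mem_cons_of_mem _ hy)) hx
    · exact ⟨s, rest.prod, hl s (List.mem_cons_self), hs, List.prod_cons⟩

theorem nu_lt (hν0 : ∀ a : A, a ≠ 1 → 0 < ν a)
    (hνm : ∀ a b : A, ν a + ν b ≤ ν (a * b)) {x s y : A} (h : x = s * y) (hs : s ≠ 1) :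
    ν y < ν x := by
  have h1 := hνm s y; have h2 := hν0 s hs; rw [← h] at h1; omega

end Core
section Core2

variable {A : Type*} [Monoid A] {Δ : A} {ν : A → ℕ}

/-- Lemma C: the lcm of any element with a simple element is obtained by
right-multiplying by a simple element. -/
theorem lemC (hcl : ∀ a b c : A, a * b = a * c → b = c)
    (hν0 : ∀ a : A, a ≠ 1 → 0 < ν a) (hνm : ∀ a b : A, ν a + ν b ≤ ν (a * b))
    (hlcm : ∀ a b : A, (∃ c, LDvd a c ∧ LDvd b c) → ∃ m, IsLcmL a b m)
    (hbal : IsBalanced Δ)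
    (hgen : ∀ x : A, ∃ l : List A, (∀ y ∈ l, y ∈ Factors Δ) ∧ l.prod = x) :
    ∀ n : ℕ, ∀ x s : A, ν x ≤ n → s ∈ Factors Δ → (∃ W, LDvd x W ∧ LDvd s W) →
      ∃ m q, IsLcmL x s m ∧ m = x * q ∧ q ∈ Factors Δ := by
  intro n
  induction n with
  | zero =>
    intro x s hn hs _
    have hx : x = 1 := by by_contra hc; have := hν0 x hc; omega
    subst hx
    exact ⟨s, s, ⟨one_ldvd s, LDvd.refl s, fun c _ h2 => h2⟩, (one_mul s).symm, hs⟩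
  | succ n ih =>
    intro x s hn hs hW
    by_cases hx1 : x = 1
    · subst hx1
      exact ⟨s, s, ⟨one_ldvd s, LDvd.refl s, fun c _ h2 => h2⟩, (one_mul s).symm, hs⟩
    obtain ⟨a, x'', ha, ha1, hax⟩ := simple_head hgen hx1
    have hνx'' : ν x'' ≤ n := by have := nu_lt hν0 hνm hax ha1; omega
    obtain ⟨W, ⟨c₁, hWx⟩, hWs⟩ := hW
    -- lcm of a and s
    have haW : LDvd a W := ⟨x'' * c₁, by rw [hWx, hax, mul_assoc]⟩
    obtain ⟨m₀, hm₀⟩ := hlcm a s ⟨W, haW, hWs⟩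
    have hm₀Δ : LDvd m₀ Δ :=
      hm₀.2.2 Δ (ldvd_of_mem_factors hbal ha) (ldvd_of_mem_factors hbal hs)
    obtain ⟨s₁, hs₁⟩ := hm₀.1
    obtain ⟨a₁, ha₁⟩ := hm₀.2.1
    have hs₁Δ : s₁ ∈ Factors Δ := by
      obtain ⟨w, hw⟩ := hm₀Δ
      exact ⟨a, w, by rw [hw, hs₁]⟩
    -- m₀ divides W
    obtain ⟨e, he⟩ := hm₀.2.2 W haW hWs
    have hcan : x'' * c₁ = s₁ * e := by
      apply hcl a
      rw [← mul_assoc, ← hax, ← hWx, he, hs₁, mul_assoc]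
    obtain ⟨m', q', hm', hm'eq, hq'⟩ :=
      ih x'' s₁ hνx'' hs₁Δ ⟨s₁ * e, ⟨c₁, hcan.symm⟩, ⟨e, rfl⟩⟩
    refine ⟨a * m', q', ⟨⟨q', by rw [hm'eq, ← mul_assoc, ← hax]⟩, ?_, ?_⟩,
      by rw [hm'eq, ← mul_assoc, ← hax], hq'⟩
    · obtain ⟨f, hf⟩ := hm'.2.1
      exact ⟨a₁ * f, by rw [hf, ← mul_assoc, ← hs₁, ha₁, mul_assoc]⟩
    · intro C hxC hsC
      obtain ⟨p, hp⟩ := hxC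
      have haC : LDvd a C := ⟨x'' * p, by rw [hp, hax, mul_assoc]⟩
      obtain ⟨g, hg⟩ := hm₀.2.2 C haC hsC
      have hcan2 : x'' * p = s₁ * g := by
        apply hcl a
        rw [← mul_assoc, ← hax, ← hp, hg, hs₁, mul_assoc]
      obtain ⟨j, hj⟩ := hm'.2.2 (x'' * p) ⟨p, rfl⟩ ⟨g, hcan2⟩
      exact ⟨j, by rw [hp, hax, mul_assoc, hj, ← mul_assoc]⟩

/-- Lemma F: the lcm of any element with a product of `k` simples is obtained by
right-multiplying by a product of `k` simples. -/
theorem lemF (hcl : ∀ a b c : A, a * b = a * c → b = c)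
    (hν0 : ∀ a : A, a ≠ 1 → 0 < ν a) (hνm : ∀ a b : A, ν a + ν b ≤ ν (a * b))
    (hlcm : ∀ a b : A, (∃ c, LDvd a c ∧ LDvd b c) → ∃ m, IsLcmL a b m)
    (hbal : IsBalanced Δ)
    (hgen : ∀ x : A, ∃ l : List A, (∀ y ∈ l, y ∈ Factors Δ) ∧ l.prod = x) :
    ∀ (l : List A) (x : A), (∀ y ∈ l, y ∈ Factors Δ) →
      (∃ W, LDvd x W ∧ LDvd l.prod W) →
      ∃ (m : A) (l' : List A), IsLcmL x l.prod m ∧ l'.length = l.length ∧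
        (∀ y ∈ l', y ∈ Factors Δ) ∧ m = x * l'.prod := by
  intro l
  induction l with
  | nil =>
    intro x _ _
    refine ⟨x, [], ⟨LDvd.refl x, ?_, fun c h1 _ => h1⟩, rfl, by simp, by simp⟩
    rw [List.prod_nil]; exact one_ldvd x
  | cons s rest ih =>
    intro x hl hW
    obtain ⟨W, ⟨c₁, hWx⟩, ⟨c₂, hWp⟩⟩ := hW
    rw [List.prod_cons] at hWp
    have hsW : LDvd s W := ⟨rest.prod * c₂, by rw [hWp, mul_assoc]⟩
    obtain ⟨m₁, q, hm₁, hm₁eq, hq⟩ :=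
      lemC hcl hν0 hνm hlcm hbal hgen (ν x) x s le_rfl
        (hl s (List.mem_cons_self)) ⟨W, ⟨c₁, hWx⟩, hsW⟩
    obtain ⟨x₁, hx₁⟩ := hm₁.2.1
    obtain ⟨e, he⟩ := hm₁.2.2 W ⟨c₁, hWx⟩ hsW
    have hcan : x₁ * e = rest.prod * c₂ := by
      apply hcl s
      rw [← mul_assoc, ← hx₁, ← he, hWp, mul_assoc]
    obtain ⟨m₂, l₂, hm₂, hlen₂, hl₂, hm₂eq⟩ :=
      ih x₁ (fun y hy => hl y (List.mem_cons_of_mem _ hy))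
        ⟨x₁ * e, ⟨e, rfl⟩, ⟨c₂, hcan⟩⟩
    refine ⟨s * m₂, q :: l₂, ⟨?_, ?_, ?_⟩, by simp [hlen₂], ?_, ?_⟩
    · exact ⟨q * l₂.prod, by rw [hm₂eq, ← mul_assoc, ← hx₁, hm₁eq, mul_assoc]⟩
    · obtain ⟨w, hw⟩ := hm₂.2.1
      rw [List.prod_cons]
      exact ⟨w, by rw [hw, ← mul_assoc]⟩
    · intro C hxC hpC
      obtain ⟨c₃, hc₃⟩ := hpC
      rw [List.prod_cons, mul_assoc] at hc₃
      obtain ⟨g, hg⟩ := hm₁.2.2 C hxC ⟨rest.prod * c₃, hc₃⟩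
      have hcan2 : rest.prod * c₃ = x₁ * g := by
        apply hcl s
        rw [← hc₃, hg, hx₁, mul_assoc]
      obtain ⟨t, ht⟩ := hm₂.2.2 (x₁ * g) ⟨g, rfl⟩ ⟨c₃, hcan2.symm⟩
      exact ⟨t, by rw [hc₃, hcan2, ht, ← mul_assoc]⟩
    · exact fun y hy => by
        rcases List.mem_cons.1 hy with h | h
        · subst h; exact hq
        · exact hl₂ y h
    · rw [List.prod_cons, hm₂eq, ← mul_assoc, ← hx₁, hm₁eq, mul_assoc]

end Core2
section Core3

variable {A : Type*} [Monoid A] {Δ : A} {ν : A → ℕ}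

/-- Lemma E: if a simple element left-divides a product of `k` simples, the
complement is a product of `k` simples. -/
theorem lemE (hcl : ∀ a b c : A, a * b = a * c → b = c)
    (hν0 : ∀ a : A, a ≠ 1 → 0 < ν a) (hνm : ∀ a b : A, ν a + ν b ≤ ν (a * b))
    (hlcm : ∀ a b : A, (∃ c, LDvd a c ∧ LDvd b c) → ∃ m, IsLcmL a b m)
    (hbal : IsBalanced Δ)
    (hgen : ∀ x : A, ∃ l : List A, (∀ y ∈ l, y ∈ Factors Δ) ∧ l.prod = x) :
    ∀ (l : List A) (s : A), (∀ y ∈ l, y ∈ Factors Δ) → s ∈ Factors Δ →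
      LDvd s l.prod →
      ∃ l' : List A, l'.length = l.length ∧ (∀ y ∈ l', y ∈ Factors Δ) ∧
        l.prod = s * l'.prod := by
  intro l
  induction l with
  | nil =>
    intro s _ _ hdvd
    rw [List.prod_nil] at hdvd ⊢
    have := ldvd_one_eq hν0 hνm hdvd
    exact ⟨[], rfl, by simp, by simp [this]⟩
  | cons t rest ih =>
    intro s hl hs hdvd
    rw [List.prod_cons] at hdvd
    have ht : t ∈ Factors Δ := hl t (List.mem_cons_self)
    -- lcm of t and s, with simple complement q on the t side
    obtain ⟨m, q, hm, hmeq, hq⟩ :=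
      lemC hcl hν0 hνm hlcm hbal hgen (ν t) t s le_rfl hs
        ⟨t * rest.prod, ⟨rest.prod, rfl⟩, hdvd⟩
    obtain ⟨ss, hss⟩ := hm.2.1
    obtain ⟨z, hz⟩ := hm.2.2 (t * rest.prod) ⟨rest.prod, rfl⟩ hdvd
    have hqz : rest.prod = q * z := by
      apply hcl t
      rw [← mul_assoc, ← hmeq, ← hz]
    obtain ⟨l₁, hlen₁, hl₁, hprod₁⟩ :=
      ih q (fun y hy => hl y (List.mem_cons_of_mem _ hy)) hq ⟨z, hqz⟩
    have hzprod : z = l₁.prod := by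
      apply hcl q; rw [← hqz, hprod₁]
    have hssΔ : ss ∈ Factors Δ := by
      obtain ⟨w, hw⟩ := hm.2.2 Δ (ldvd_of_mem_factors hbal ht)
        (ldvd_of_mem_factors hbal hs)
      exact ⟨s, w, by rw [hw, hss, mul_assoc]⟩
    refine ⟨ss :: l₁, by simp [hlen₁], ?_, ?_⟩
    · intro y hy
      rcases List.mem_cons.1 hy with h | h
      · subst h; exact hssΔ
      · exact hl₁ y h
    · rw [List.prod_cons, List.prod_cons, ← hzprod, ← mul_assoc, ← hss, hz, hmeq,
        mul_assoc, ← hqz]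

/-- Lemma E': if any element left-divides a product of `k` simples, the
complement is a product of `k` simples. -/
theorem lemE' (hcl : ∀ a b c : A, a * b = a * c → b = c)
    (hν0 : ∀ a : A, a ≠ 1 → 0 < ν a) (hνm : ∀ a b : A, ν a + ν b ≤ ν (a * b))
    (hlcm : ∀ a b : A, (∃ c, LDvd a c ∧ LDvd b c) → ∃ m, IsLcmL a b m)
    (hbal : IsBalanced Δ)
    (hgen : ∀ x : A, ∃ l : List A, (∀ y ∈ l, y ∈ Factors Δ) ∧ l.prod = x) :
    ∀ (n : ℕ) (x : A) (l : List A), ν x ≤ n → (∀ y ∈ l, y ∈ Factors Δ) →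
      LDvd x l.prod →
      ∃ l' : List A, l'.length = l.length ∧ (∀ y ∈ l', y ∈ Factors Δ) ∧
        l.prod = x * l'.prod := by
  intro n
  induction n with
  | zero =>
    intro x l hn hl _
    have hx : x = 1 := by by_contra hc; have := hν0 x hc; omega
    subst hx
    exact ⟨l, rfl, hl, (one_mul _).symm⟩
  | succ n ihn =>
    intro x l hn hl hdvd
    by_cases hx1 : x = 1
    · subst hx1; exact ⟨l, rfl, hl, (one_mul _).symm⟩
    obtain ⟨s, x'', hsΔ, hs1, hax⟩ := simple_head hgen hx1
    have hνx'' : ν x'' ≤ n := by have := nu_lt hν0 hνm hax hs1; omega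
    have hsdvd : LDvd s l.prod := by
      obtain ⟨z, hz⟩ := hdvd
      exact ⟨x'' * z, by rw [hz, hax, mul_assoc]⟩
    obtain ⟨l₂, hlen₂, hl₂, hprod₂⟩ := lemE hcl hν0 hνm hlcm hbal hgen l s hl hsΔ hsdvd
    have hx''dvd : LDvd x'' l₂.prod := by
      obtain ⟨z, hz⟩ := hdvd
      refine ⟨z, ?_⟩
      apply hcl s
      rw [← hprod₂, hz, hax, mul_assoc]
    obtain ⟨l', hlen', hl', hprod'⟩ := ihn x'' l₂ hνx'' hl₂ hx''dvd
    refine ⟨l', by rw [hlen', hlen₂], hl', ?_⟩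
    rw [hprod₂, hprod', hax, mul_assoc]

end Core3
section Op
open MulOpposite

variable {A : Type*} [Monoid A]

theorem ldvd_op {a b : A} : LDvd (op a) (op b) ↔ RDvd a b := by
  constructor
  · rintro ⟨c, hc⟩
    exact ⟨c.unop, op_injective (by rw [hc, op_mul, op_unop])⟩
  · rintro ⟨c, hc⟩
    exact ⟨op c, by rw [hc, op_mul]⟩

theorem rdvd_op {a b : A} : RDvd (op a) (op b) ↔ LDvd a b := by
  constructor
  · rintro ⟨c, hc⟩
    exact ⟨c.unop, op_injective (by rw [hc, op_mul, op_unop])⟩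
  · rintro ⟨c, hc⟩
    exact ⟨op c, by rw [hc, op_mul]⟩

theorem factors_op {Δ x : A} : op x ∈ Factors (op Δ) ↔ x ∈ Factors Δ := by
  constructor
  · rintro ⟨c, d, h⟩
    exact ⟨d.unop, c.unop, op_injective (by rw [h, op_mul, op_mul, op_unop, op_unop,
      mul_assoc])⟩
  · rintro ⟨c, d, h⟩
    exact ⟨op d, op c, by rw [h, op_mul, op_mul, ← mul_assoc]⟩

theorem factors_op' {Δ : A} {y : Aᵐᵒᵖ} : y ∈ Factors (op Δ) ↔ y.unop ∈ Factors Δ := by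
  simpa using (factors_op (Δ := Δ) (x := y.unop))

theorem isLcmL_op {a b m : A} : IsLcmL (op a) (op b) (op m) ↔ IsLcmR a b m := by
  constructor
  · rintro ⟨h1, h2, h3⟩
    refine ⟨ldvd_op.1 h1, ldvd_op.1 h2, fun c hc1 hc2 => ?_⟩
    exact ldvd_op.1 (h3 (op c) (ldvd_op.2 hc1) (ldvd_op.2 hc2))
  · rintro ⟨h1, h2, h3⟩
    refine ⟨ldvd_op.2 h1, ldvd_op.2 h2, fun c hc1 hc2 => ?_⟩
    rw [← op_unop c] at hc1 hc2 ⊢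
    exact ldvd_op.2 (h3 c.unop (ldvd_op.1 hc1) (ldvd_op.1 hc2))

theorem isBalanced_op {Δ : A} (hbal : IsBalanced Δ) : IsBalanced (op Δ) := by
  apply Set.ext
  intro y
  have h1 : LDvd y (op Δ) ↔ RDvd y.unop Δ := by rw [← op_unop y]; exact ldvd_op
  have h2 : RDvd y (op Δ) ↔ LDvd y.unop Δ := by rw [← op_unop y]; exact rdvd_op
  have h3 := Set.ext_iff.1 hbal y.unop
  show LDvd y (op Δ) ↔ RDvd y (op Δ)
  rw [h1, h2]
  exact ⟨h3.2, h3.1⟩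

theorem gen_op {Δ : A} (hgen : ∀ x : A, ∃ l : List A, (∀ y ∈ l, y ∈ Factors Δ) ∧ l.prod = x) :
    ∀ x : Aᵐᵒᵖ, ∃ l : List Aᵐᵒᵖ, (∀ y ∈ l, y ∈ Factors (op Δ)) ∧ l.prod = x := by
  intro x
  obtain ⟨l, hl, hp⟩ := hgen x.unop
  refine ⟨(l.map op).reverse, ?_, ?_⟩
  · intro y hy
    rw [List.mem_reverse, List.mem_map] at hy
    obtain ⟨z, hz, rfl⟩ := hy
    exact factors_op.2 (hl z hz)
  · rw [← MulOpposite.op_list_prod, hp, op_unop]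

end Op

section NTheory

variable {A : Type*} [Monoid A] (N : Submonoid A) (ΔN : A)

/-- `y` is a simple element of `N` (with the complement on the right). -/
def SN (y : A) : Prop := y ∈ N ∧ ∃ t, t ∈ N ∧ ΔN = y * t

theorem SN_tail (hset : {b : A | b ∈ N ∧ ∃ c ∈ N, ΔN = b * c} =
      {b : A | b ∈ N ∧ ∃ c ∈ N, ΔN = c * b})
    {y t : A} (hy : y ∈ N) (ht : t ∈ N) (h : ΔN = y * t) : SN N ΔN t := by
  have h1 : t ∈ {b : A | b ∈ N ∧ ∃ c ∈ N, ΔN = c * b} := ⟨ht, y, hy, h⟩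
  rw [← hset] at h1
  exact ⟨h1.1, h1.2⟩

theorem SN_comm (hset : {b : A | b ∈ N ∧ ∃ c ∈ N, ΔN = b * c} =
      {b : A | b ∈ N ∧ ∃ c ∈ N, ΔN = c * b})
    {y : A} (hy : SN N ΔN y) : ∃ u, SN N ΔN u ∧ y * ΔN = ΔN * u := by
  obtain ⟨hyN, t, htN, ht⟩ := hy
  obtain ⟨htN', u, huN, hu⟩ := SN_tail N ΔN hset hyN htN ht
  refine ⟨u, SN_tail N ΔN hset htN' huN hu, ?_⟩
  calc y * ΔN = y * (t * u) := by rw [hu]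
    _ = y * t * u := (mul_assoc _ _ _).symm
    _ = ΔN * u := by rw [← ht]

theorem SN_comm_pow (hset : {b : A | b ∈ N ∧ ∃ c ∈ N, ΔN = b * c} =
      {b : A | b ∈ N ∧ ∃ c ∈ N, ΔN = c * b}) :
    ∀ (m : ℕ) {y : A}, SN N ΔN y → ∃ u, SN N ΔN u ∧ y * ΔN ^ m = ΔN ^ m * u := by
  intro m
  induction m with
  | zero => intro y hy; exact ⟨y, hy, by rw [pow_zero, mul_one, one_mul]⟩
  | succ m ih =>
    intro y hy
    obtain ⟨u, hu, huc⟩ := SN_comm N ΔN hset hy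
    obtain ⟨v, hv, hvc⟩ := ih hu
    refine ⟨v, hv, ?_⟩
    rw [pow_succ', ← mul_assoc, huc, mul_assoc, hvc, ← mul_assoc]

theorem SN_prod_ldvd (hset : {b : A | b ∈ N ∧ ∃ c ∈ N, ΔN = b * c} =
      {b : A | b ∈ N ∧ ∃ c ∈ N, ΔN = c * b}) :
    ∀ l : List A, (∀ y ∈ l, SN N ΔN y) → ∃ r, ΔN ^ l.length = l.prod * r := by
  intro l
  induction l with
  | nil => exact fun _ => ⟨1, by simp⟩
  | cons y rest ih =>
    intro hl
    obtain ⟨r, hr⟩ := ih (fun z hz => hl z (List.mem_cons_of_mem _ hz))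
    obtain ⟨hyN, t, htN, ht⟩ := hl y (List.mem_cons_self)
    have hSNt : SN N ΔN t := SN_tail N ΔN hset hyN htN ht
    obtain ⟨u, _, huc⟩ := SN_comm_pow N ΔN hset rest.length hSNt
    refine ⟨r * u, ?_⟩
    simp only [List.prod_cons, List.length_cons]
    calc ΔN ^ (rest.length + 1) = ΔN * ΔN ^ rest.length := pow_succ' _ _
      _ = y * t * ΔN ^ rest.length := by rw [← ht]
      _ = y * (t * ΔN ^ rest.length) := mul_assoc _ _ _
      _ = y * (ΔN ^ rest.length * u) := by rw [huc]
      _ = y * (rest.prod * r * u) := by rw [hr]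
      _ = y * rest.prod * (r * u) := by simp [mul_assoc]

end NTheory
/-- **Lemma 4.2.** Let `M` be a Garside monoid with Garside element `Δ`, `N` a
parabolic submonoid, and `Δ_N` the Garside element of `N` with
`Div Δ_N = Div Δ ∩ N`. For `a, b ∈ M`, the sequence `(b ∧_L Δ_N^n)` stabilizes for
`n ≥ |b|`, and the sequence `(a ∧_R (Δ_N^n b))` stabilizes for `n ≥ |a|`. -/
theorem lemma_4_2 {M : Type*} [Monoid M] (hM : IsPreGarside M) (Δ : M)
    (hΔ : IsGarsideElt Δ) (N : Submonoid M) (hN : IsParabolic N) (ΔN : M)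
    (hΔN : IsGarsideEltIn N ΔN) (hdiv : FactorsIn N ΔN = Factors Δ ∩ (N : Set M))
    (a b : M) :
    (∀ n : ℕ, lenFactors Δ b ≤ n →
      ∀ d : M, IsGcdL b (ΔN ^ n) d ↔ IsGcdL b (ΔN ^ lenFactors Δ b) d) ∧
    ∀ n : ℕ, lenFactors Δ a ≤ n →
      ∀ d : M, IsGcdR a (ΔN ^ n * b) d ↔ IsGcdR a (ΔN ^ lenFactors Δ a * b) d := by
  classical
  open MulOpposite in
  obtain ⟨hcanc, ⟨ν, hν0, hνm⟩, hlcmL, hlcmR⟩ := hM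
  have hcl : ∀ a b c : M, a * b = a * c → b = c := fun a b c h =>
    hcanc b c a 1 (by rw [mul_one, mul_one, h])
  have hcr : ∀ a b c : M, b * a = c * a → b = c := fun a b c h =>
    hcanc b c 1 a (by rw [one_mul, one_mul, h])
  have hbal := hΔ.1
  have hgen : ∀ x : M, ∃ l : List M, (∀ y ∈ l, y ∈ Factors Δ) ∧ l.prod = x := fun x =>
    Submonoid.exists_list_of_mem_closure (by rw [hΔ.2]; trivial)
  -- opposite-monoid versions of the hypotheses
  have hclop : ∀ a b c : Mᵐᵒᵖ, a * b = a * c → b = c := by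
    intro a b c h
    have h' : b.unop * a.unop = c.unop * a.unop := by
      have := congrArg unop h
      simpa using this
    exact unop_injective (hcr a.unop b.unop c.unop h')
  have hν0op : ∀ a : Mᵐᵒᵖ, a ≠ 1 → 0 < ν a.unop := by
    intro a ha
    refine hν0 a.unop fun h => ha ?_
    rw [← op_unop a, h, op_one]
  have hνmop : ∀ a b : Mᵐᵒᵖ, ν a.unop + ν b.unop ≤ ν (a * b).unop := by
    intro a b
    rw [unop_mul]
    have := hνm b.unop a.unop
    omega
  have hlcmop : ∀ a b : Mᵐᵒᵖ, (∃ c, LDvd a c ∧ LDvd b c) → ∃ m, IsLcmL a b m := by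
    rintro a b ⟨c, h1, h2⟩
    have h1' : RDvd a.unop c.unop := ldvd_op.1 (by simpa using h1)
    have h2' : RDvd b.unop c.unop := ldvd_op.1 (by simpa using h2)
    obtain ⟨m, hm⟩ := hlcmR a.unop b.unop ⟨c.unop, h1', h2'⟩
    exact ⟨op m, by simpa using isLcmL_op.2 hm⟩
  have hbalop : IsBalanced (op Δ) := isBalanced_op hbal
  have hgenop := gen_op hgen
  -- list transport helpers
  have hlistop : ∀ l : List M, (∀ y ∈ l, y ∈ Factors Δ) →
      ∀ y ∈ (l.map op).reverse, y ∈ Factors (op Δ) := by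
    intro l hl y hy
    rw [List.mem_reverse, List.mem_map] at hy
    obtain ⟨z, hz, rfl⟩ := hy
    exact factors_op.2 (hl z hz)
  have hlistunop : ∀ l' : List Mᵐᵒᵖ, (∀ y ∈ l', y ∈ Factors (op Δ)) →
      ∀ y ∈ (l'.map unop).reverse, y ∈ Factors Δ := by
    intro l' hl' y hy
    rw [List.mem_reverse, List.mem_map] at hy
    obtain ⟨z, hz, rfl⟩ := hy
    exact factors_op'.1 (hl' z hz)
  -- right-handed version of Lemma E'
  have hE'R : ∀ (x : M) (l : List M), (∀ y ∈ l, y ∈ Factors Δ) → RDvd x l.prod →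
      ∃ l' : List M, l'.length = l.length ∧ (∀ y ∈ l', y ∈ Factors Δ) ∧
        l.prod = l'.prod * x := by
    intro x l hl hdvd
    have hprod : ((l.map op).reverse).prod = op l.prod := (MulOpposite.op_list_prod l).symm
    have hdvdop : LDvd (op x) ((l.map op).reverse).prod := by
      rw [hprod]; exact ldvd_op.2 hdvd
    obtain ⟨l', hlen, hl', hp⟩ := lemE' hclop hν0op hνmop hlcmop hbalop hgenop
      (ν x) (op x) ((l.map op).reverse) le_rfl (hlistop l hl) hdvdop
    rw [hprod] at hp
    have h2 := congrArg unop hp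
    simp only [unop_mul, unop_op] at h2
    rw [MulOpposite.unop_list_prod] at h2
    refine ⟨(l'.map unop).reverse, ?_, hlistunop l' hl', h2⟩
    simpa using hlen
  -- right-handed version of Lemma F
  have hFR : ∀ (l : List M) (x : M), (∀ y ∈ l, y ∈ Factors Δ) →
      (∃ W, RDvd x W ∧ RDvd l.prod W) →
      ∃ (m : M) (l' : List M), IsLcmR x l.prod m ∧ l'.length = l.length ∧
        (∀ y ∈ l', y ∈ Factors Δ) ∧ m = l'.prod * x := by
    rintro l x hl ⟨W, hw1, hw2⟩
    have hprod : ((l.map op).reverse).prod = op l.prod := (MulOpposite.op_list_prod l).symm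
    obtain ⟨m, l', hm, hlen, hl', heq⟩ := lemF hclop hν0op hνmop hlcmop hbalop hgenop
      ((l.map op).reverse) (op x) (hlistop l hl)
      ⟨op W, ldvd_op.2 hw1, by rw [hprod]; exact ldvd_op.2 hw2⟩
    have hm' : IsLcmL (op x) (op l.prod) (op m.unop) := by
      rw [op_unop, ← hprod]; exact hm
    have h2 := congrArg unop heq
    simp only [unop_mul, unop_op] at h2
    rw [MulOpposite.unop_list_prod] at h2
    refine ⟨m.unop, (l'.map unop).reverse, isLcmL_op.1 hm', ?_, hlistunop l' hl', h2⟩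
    simpa using hlen
  -- Lemma D, both versions
  have hDL : ∀ (x : M) (l : List M), (∀ y ∈ l, y ∈ Factors Δ) → LDvd x l.prod →
      ∃ l'' : List M, l''.length = l.length ∧ (∀ y ∈ l'', y ∈ Factors Δ) ∧
        l''.prod = x := by
    intro x l hl hdvd
    obtain ⟨l₁, hlen₁, hl₁, hp₁⟩ := lemE' hcl hν0 hνm hlcmL hbal hgen (ν x) x l
      le_rfl hl hdvd
    obtain ⟨l₃, hlen₃, hl₃, hp₃⟩ := hE'R l₁.prod l hl ⟨x, hp₁⟩
    exact ⟨l₃, hlen₃, hl₃, hcr l₁.prod l₃.prod x (by rw [← hp₃]; exact hp₁)⟩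
  have hDR : ∀ (x : M) (l : List M), (∀ y ∈ l, y ∈ Factors Δ) → RDvd x l.prod →
      ∃ l'' : List M, l''.length = l.length ∧ (∀ y ∈ l'', y ∈ Factors Δ) ∧
        l''.prod = x := by
    intro x l hl hdvd
    obtain ⟨l₁, hlen₁, hl₁, hp₁⟩ := hE'R x l hl hdvd
    obtain ⟨l₃, hlen₃, hl₃, hp₃⟩ := lemE' hcl hν0 hνm hlcmL hbal hgen (ν l₁.prod)
      l₁.prod l le_rfl hl ⟨x, hp₁⟩
    exact ⟨l₃, hlen₃, hl₃, hcl l₁.prod l₃.prod x (by rw [← hp₃]; exact hp₁)⟩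
  -- simple elements of N
  have hset := hΔN.2.1
  have hSN'_of : ∀ y : M, y ∈ Factors Δ → y ∈ N →
      y ∈ {b : M | b ∈ N ∧ ∃ c ∈ N, ΔN = c * b} := by
    intro y hyF hyN
    have hyFin : y ∈ FactorsIn N ΔN := by rw [hdiv]; exact ⟨hyF, hyN⟩
    obtain ⟨_, c, hc, d, hd, hcd⟩ := hyFin
    have h1 : c * y ∈ {e : M | e ∈ N ∧ ∃ f ∈ N, ΔN = e * f} := ⟨N.mul_mem hc hyN, d, hd, hcd⟩
    rw [hset] at h1
    obtain ⟨_, e, he, heq⟩ := h1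
    exact ⟨hyN, e * c, N.mul_mem he hc, by rw [heq, ← mul_assoc]⟩
  have hSN_of : ∀ y : M, y ∈ Factors Δ → y ∈ N → SN N ΔN y := by
    intro y hyF hyN
    have h2 := hSN'_of y hyF hyN
    rw [← hset] at h2
    exact ⟨h2.1, h2.2⟩
  -- opposite version of the balancedness set for N
  have hset_op : {e : Mᵐᵒᵖ | e ∈ N.op ∧ ∃ c ∈ N.op, op ΔN = e * c} =
      {e : Mᵐᵒᵖ | e ∈ N.op ∧ ∃ c ∈ N.op, op ΔN = c * e} := by
    ext y
    constructor
    · rintro ⟨hy, c, hc, hyc⟩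
      have h1 : y.unop ∈ {e : M | e ∈ N ∧ ∃ f ∈ N, ΔN = f * e} := by
        refine ⟨Submonoid.mem_op.1 hy, c.unop, Submonoid.mem_op.1 hc, ?_⟩
        have := congrArg unop hyc
        simpa using this
      rw [← hset] at h1
      obtain ⟨_, f, hf, hfe⟩ := h1
      refine ⟨hy, op f, Submonoid.mem_op.2 (by simpa using hf), ?_⟩
      rw [← op_unop y, ← op_mul, ← hfe]
    · rintro ⟨hy, c, hc, hyc⟩
      have h1 : y.unop ∈ {e : M | e ∈ N ∧ ∃ f ∈ N, ΔN = e * f} := by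
        refine ⟨Submonoid.mem_op.1 hy, c.unop, Submonoid.mem_op.1 hc, ?_⟩
        have := congrArg unop hyc
        simpa using this
      rw [hset] at h1
      obtain ⟨_, f, hf, hfe⟩ := h1
      refine ⟨hy, op f, Submonoid.mem_op.2 (by simpa using hf), ?_⟩
      rw [← op_unop y, ← op_mul, ← hfe]
  -- right-handed product lemma for N-simples
  have hSNR_prod : ∀ l : List M, (∀ y ∈ l, y ∈ N ∧ ∃ t, t ∈ N ∧ ΔN = t * y) →
      ∃ r, ΔN ^ l.length = r * l.prod := by
    intro l hl
    have hSNop : ∀ y ∈ (l.map op).reverse, SN N.op (op ΔN) y := by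
      intro y hy
      rw [List.mem_reverse, List.mem_map] at hy
      obtain ⟨z, hz, rfl⟩ := hy
      obtain ⟨hzN, t, htN, ht⟩ := hl z hz
      exact ⟨Submonoid.mem_op.2 (by simpa using hzN), op t,
        Submonoid.mem_op.2 (by simpa using htN), by rw [← op_mul, ← ht]⟩
    obtain ⟨r, hr⟩ := SN_prod_ldvd N.op (op ΔN) hset_op ((l.map op).reverse) hSNop
    have hprod : ((l.map op).reverse).prod = op l.prod := (MulOpposite.op_list_prod l).symm
    rw [hprod, ← op_pow] at hr
    have h2 := congrArg unop hr
    simp only [unop_mul, unop_op] at h2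
    refine ⟨r.unop, ?_⟩
    simpa using h2
  -- members of a product in N are in N
  have hmemN : ∀ l : List M, l.prod ∈ N → ∀ y ∈ l, y ∈ N := by
    intro l
    induction l with
    | nil => intro _ y hy; simp at hy
    | cons z rest ih =>
      intro hp y hy
      rw [List.prod_cons] at hp
      have hz := hN.1 z rest.prod hp
      rcases List.mem_cons.1 hy with h | h
      · subst h; exact hz.1
      · exact ih hz.2 y h
  -- minimal-length factorizations
  have hmin : ∀ x : M, ∃ l : List M, l.length = lenFactors Δ x ∧
      (∀ y ∈ l, y ∈ Factors Δ) ∧ l.prod = x := by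
    intro x
    have hne : {k | ∃ l : List M, l.length = k ∧ (∀ y ∈ l, y ∈ Factors Δ) ∧
        l.prod = x}.Nonempty := by
      obtain ⟨l, hl, hp⟩ := hgen x
      exact ⟨l.length, l, rfl, hl, hp⟩
    have := Nat.sInf_mem hne
    exact this
  -- monotonicity
  have hmonL : ∀ k n : ℕ, k ≤ n → ∀ c : M, LDvd c (ΔN ^ k) → LDvd c (ΔN ^ n) := by
    rintro k n hkn c ⟨r, hr⟩
    have hpow : ΔN ^ n = ΔN ^ k * ΔN ^ (n - k) := by
      rw [← pow_add, Nat.add_sub_cancel' hkn]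
    exact ⟨r * ΔN ^ (n - k), by rw [hpow, hr, mul_assoc]⟩
  have hmonR : ∀ k n : ℕ, k ≤ n → ∀ c : M, RDvd c (ΔN ^ k * b) → RDvd c (ΔN ^ n * b) := by
    rintro k n hkn c ⟨w, hw⟩
    have hpow : ΔN ^ n = ΔN ^ (n - k) * ΔN ^ k := by
      rw [← pow_add, Nat.sub_add_cancel hkn]
    exact ⟨ΔN ^ (n - k) * w, by rw [hpow, mul_assoc, hw, ← mul_assoc]⟩
  -- key stabilization claims
  have key1 : ∀ n : ℕ, lenFactors Δ b ≤ n → ∀ c : M, LDvd c b → LDvd c (ΔN ^ n) →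
      LDvd c (ΔN ^ lenFactors Δ b) := by
    intro n hn c hcb hcn
    obtain ⟨lb, hlb_len, hlb, hlb_prod⟩ := hmin b
    obtain ⟨lc, hlc_len, hlc, hlc_prod⟩ := hDL c lb hlb (by rw [hlb_prod]; exact hcb)
    obtain ⟨r, hr⟩ := hcn
    have hcN : c ∈ N := (hN.1 c r (by rw [← hr]; exact pow_mem hΔN.1 n)).1
    have hSNlc : ∀ y ∈ lc, SN N ΔN y := fun y hy =>
      hSN_of y (hlc y hy) (hmemN lc (by rw [hlc_prod]; exact hcN) y hy)
    obtain ⟨r', hr'⟩ := SN_prod_ldvd N ΔN hset lc hSNlc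
    exact ⟨r', by rw [← hlb_len, ← hlc_len, hr', hlc_prod]⟩
  have key2 : ∀ n : ℕ, lenFactors Δ a ≤ n → ∀ c : M, RDvd c a → RDvd c (ΔN ^ n * b) →
      RDvd c (ΔN ^ lenFactors Δ a * b) := by
    intro n hn c hca hcn
    obtain ⟨la, hla_len, hla, hla_prod⟩ := hmin a
    obtain ⟨lc, hlc_len, hlc, hlc_prod⟩ := hDR c la hla (by rw [hla_prod]; exact hca)
    have hcW : RDvd lc.prod (ΔN ^ n * b) := by rw [hlc_prod]; exact hcn
    obtain ⟨m, l', hm, hl'_len, hl', hmeq⟩ :=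
      hFR lc b hlc ⟨ΔN ^ n * b, ⟨ΔN ^ n, rfl⟩, hcW⟩
    obtain ⟨γ, hγ⟩ := hm.2.1
    obtain ⟨δ, hδ⟩ := hm.2.2 (ΔN ^ n * b) ⟨ΔN ^ n, rfl⟩ hcW
    have hβdvd : ΔN ^ n = δ * l'.prod := by
      apply hcr b
      rw [hδ, hmeq, ← mul_assoc]
    have hβN : l'.prod ∈ N :=
      (hN.1 δ l'.prod (by rw [← hβdvd]; exact pow_mem hΔN.1 n)).2
    have hSN'l' : ∀ y ∈ l', y ∈ N ∧ ∃ t, t ∈ N ∧ ΔN = t * y := fun y hy =>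
      hSN'_of y (hl' y hy) (hmemN l' hβN y hy)
    obtain ⟨ρ, hρ⟩ := hSNR_prod l' hSN'l'
    refine ⟨ρ * γ, ?_⟩
    have hlen : l'.length = lenFactors Δ a := by rw [hl'_len, hlc_len, hla_len]
    calc ΔN ^ lenFactors Δ a * b = ρ * l'.prod * b := by rw [← hlen, hρ]
      _ = ρ * m := by rw [mul_assoc, ← hmeq]
      _ = ρ * (γ * lc.prod) := by rw [hγ]
      _ = ρ * γ * c := by rw [hlc_prod, ← mul_assoc]
  constructor
  · intro n hn d
    constructor
    · rintro ⟨hd1, hd2, hd3⟩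
      exact ⟨hd1, key1 n hn d hd1 hd2, fun c hc1 hc2 =>
        hd3 c hc1 (hmonL _ n hn c hc2)⟩
    · rintro ⟨hd1, hd2, hd3⟩
      exact ⟨hd1, hmonL _ n hn d hd2, fun c hc1 hc2 =>
        hd3 c hc1 (key1 n hn c hc1 hc2)⟩
  · intro n hn d
    constructor
    · rintro ⟨hd1, hd2, hd3⟩
      exact ⟨hd1, key2 n hn d hd1 hd2, fun c hc1 hc2 =>
        hd3 c hc1 (hmonR _ n hn c hc2)⟩
    · rintro ⟨hd1, hd2, hd3⟩
      exact ⟨hd1, hmonR _ n hn d hd2, fun c hc1 hc2 =>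
        hd3 c hc1 (key2 n hn c hc1 hc2)⟩

end PG
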